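/- Let f, w : [a,b] → ℝ be absolutely continuous with w positive on [a,b], and let p : [a,b] → ℝ be integrable. Then for each x ∈ [a,b], ∫_a^b p(t) f(t) dt − (∫_a^b p(t) w(t) dt) · f(x)/w(x) = ∫_a^b r_x(s) Df(s) ds, where Df = (f/w)′ and r_x(s) = −∫_a^s p(t) w(t) dt for s ≤ x and r_x(s) = ∫_s^b p(t) w(t) dt for s ≥ x. -/

import Mathlib

open MeasureTheory intervalIntegral

lemma swap_aux (a b : ℝ) (hab : a ≤ b) (F G : ℝ → ℝ)
    (hF : IntervalIntegrable F volume a b) (hG : IntervalIntegrable G volume a b) :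
    (∫ t in a..b, F t * ∫ s in a..t, G s) = ∫ s in a..b, (∫ t in s..b, F t) * G s := by
  set μ := volume.restrict (Set.Ioc a b) with hμ
  have hFμ : Integrable F μ := hF.1
  have hGμ : Integrable G μ := hG.1
  have hprod : Integrable (fun z : ℝ × ℝ => F z.1 * G z.2) (μ.prod μ) := hFμ.mul_prod hGμ
  have hmeas : MeasurableSet {z : ℝ × ℝ | z.2 ≤ z.1} :=
    (isClosed_le continuous_snd continuous_fst).measurableSet
  have hind : Integrable ({z : ℝ × ℝ | z.2 ≤ z.1}.indicator fun z => F z.1 * G z.2)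
      (μ.prod μ) := hprod.indicator hmeas
  have swap := MeasureTheory.integral_integral_swap (μ := μ) (ν := μ)
    (f := fun t s => ({z : ℝ × ℝ | z.2 ≤ z.1}.indicator fun z => F z.1 * G z.2) (t, s))
    (by exact hind)
  have hL : (∫ t, ∫ s, ({z : ℝ × ℝ | z.2 ≤ z.1}.indicator fun z => F z.1 * G z.2) (t, s) ∂μ ∂μ)
      = ∫ t in a..b, F t * ∫ s in a..t, G s := by
    rw [intervalIntegral.integral_of_le hab]
    refine setIntegral_congr_fun measurableSet_Ioc (fun t ht => ?_)
    have h1 : (fun s => ({z : ℝ × ℝ | z.2 ≤ z.1}.indicator fun z => F z.1 * G z.2) (t, s))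
        = (Set.Iic t).indicator (fun s => F t * G s) := by
      funext s
      simp [Set.indicator_apply]
    rw [h1, MeasureTheory.integral_indicator measurableSet_Iic, hμ, Measure.restrict_restrict measurableSet_Iic]
    have h2 : Set.Iic t ∩ Set.Ioc a b = Set.Ioc a t := by
      ext u; simp only [Set.mem_inter_iff, Set.mem_Iic, Set.mem_Ioc]
      exact ⟨fun h => ⟨h.2.1, h.1⟩, fun h => ⟨h.2, h.1, h.2.trans ht.2⟩⟩
    rw [h2, MeasureTheory.integral_const_mul, ← intervalIntegral.integral_of_le ht.1.le]
  have hR : (∫ s, ∫ t, ({z : ℝ × ℝ | z.2 ≤ z.1}.indicator fun z => F z.1 * G z.2) (t, s) ∂μ ∂μ)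
      = ∫ s in a..b, (∫ t in s..b, F t) * G s := by
    rw [intervalIntegral.integral_of_le hab]
    refine setIntegral_congr_fun measurableSet_Ioc (fun s hs => ?_)
    have h1 : (fun t => ({z : ℝ × ℝ | z.2 ≤ z.1}.indicator fun z => F z.1 * G z.2) (t, s))
        = (Set.Ici s).indicator (fun t => F t * G s) := by
      funext t
      simp [Set.indicator_apply]
    rw [h1, MeasureTheory.integral_indicator measurableSet_Ici, hμ, Measure.restrict_restrict measurableSet_Ici]
    have h2 : Set.Ici s ∩ Set.Ioc a b = Set.Icc s b := by
      ext u; simp only [Set.mem_inter_iff, Set.mem_Ici, Set.mem_Ioc, Set.mem_Icc]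
      exact ⟨fun h => ⟨h.1, h.2.2⟩, fun h => ⟨h.1, hs.1.trans_le h.1, h.2⟩⟩
    rw [h2, MeasureTheory.integral_mul_const, MeasureTheory.integral_Icc_eq_integral_Ioc,
      ← intervalIntegral.integral_of_le hs.2]
  rw [← hL, ← hR] at *
  exact swap

/-- Lemma on the integral representation: for absolutely continuous `f, w` on `[a,b]`
with `w > 0`, integrable `p`, and `x ∈ [a,b]`,
`∫ p f − (∫ p w)·f(x)/w(x) = ∫ rₓ(s)·Df(s) ds` where `Df = (f/w)'` (given via its
integral representation) and `rₓ` is the piecewise kernel built from `p·w`.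
Absolute continuity is encoded through the fundamental theorem of calculus with an
integrable (a.e.) derivative. -/
theorem stmt3 (a b : ℝ) (hab : a < b) (f w p Df : ℝ → ℝ)
    (hfAC : ∃ f' : ℝ → ℝ, IntervalIntegrable f' volume a b ∧
      ∀ y ∈ Set.Icc a b, f y = f a + ∫ t in a..y, f' t)
    (hwAC : ∃ w' : ℝ → ℝ, IntervalIntegrable w' volume a b ∧
      ∀ y ∈ Set.Icc a b, w y = w a + ∫ t in a..y, w' t)
    (hwpos : ∀ t ∈ Set.Icc a b, 0 < w t)
    (hp : IntervalIntegrable p volume a b)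
    (hDf : IntervalIntegrable Df volume a b)
    (hFTC : ∀ y ∈ Set.Icc a b, f y / w y = f a / w a + ∫ t in a..y, Df t)
    (x : ℝ) (hx : x ∈ Set.Icc a b) :
    (∫ t in a..b, p t * f t) - (∫ t in a..b, p t * w t) * (f x / w x)
      = ∫ s in a..b,
          (if s ≤ x then -(∫ t in a..s, p t * w t) else ∫ t in s..b, p t * w t) * Df s := by
  obtain ⟨w', hw'i, hw'⟩ := hwAC
  set c : ℝ := f a / w a with hc
  set F : ℝ → ℝ := fun t => p t * w t with hF
  have mk : ∀ g : ℝ → ℝ, IntegrableOn g (Set.Ioc a b) volume →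
      IntervalIntegrable g volume a b := fun g hg =>
    ⟨hg, by rw [Set.Ioc_eq_empty (not_lt.2 hab.le)]; exact integrableOn_empty⟩
  -- F is interval integrable
  have hWcont : ContinuousOn (fun y => w a + ∫ t in a..y, w' t) (Set.uIcc a b) :=
    continuousOn_const.add (continuousOn_primitive_interval' hw'i Set.left_mem_uIcc)
  have hFint : IntervalIntegrable F volume a b := by
    have h1 : IntervalIntegrable (fun t => p t * (w a + ∫ u in a..t, w' u)) volume a b :=
      hp.mul_continuousOn hWcont
    refine mk _ (h1.1.congr ?_)
    refine (ae_restrict_iff' measurableSet_Ioc).2 (Filter.Eventually.of_forall fun t ht => ?_)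
    rw [hF]; dsimp only
    rw [← hw' t (Set.Ioc_subset_Icc_self ht)]
  set I : ℝ := ∫ t in a..b, F t with hI
  have hGcont : ContinuousOn (fun y => ∫ s in a..y, Df s) (Set.uIcc a b) :=
    continuousOn_primitive_interval' hDf Set.left_mem_uIcc
  -- Step A : rewrite ∫ p f
  have hstepA : (∫ t in a..b, p t * f t)
      = I * c + ∫ t in a..b, F t * ∫ s in a..t, Df s := by
    have hcongr : Set.EqOn (fun t => p t * f t)
        (fun t => F t * c + F t * ∫ s in a..t, Df s) (Set.uIcc a b) := by
      intro t ht
      rw [Set.uIcc_of_le hab.le] at ht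
      have hwne : w t ≠ 0 := (hwpos t ht).ne'
      have hft : f t = w t * (f t / w t) := by field_simp
      dsimp only
      rw [hft, hFTC t ht, hF]
      ring
    rw [intervalIntegral.integral_congr hcongr,
      intervalIntegral.integral_add (hFint.mul_const c) (hFint.mul_continuousOn hGcont),
      intervalIntegral.integral_mul_const]
  have hstepB : f x / w x = c + ∫ s in a..x, Df s := hFTC x hx
  -- Step C : rewrite the RHS
  have hFsub : ∀ s ∈ Set.Icc a b, IntervalIntegrable F volume a s ∧
      IntervalIntegrable F volume s b := by
    intro s hs
    have h1 : s ∈ Set.uIcc a b := by rw [Set.uIcc_of_le hab.le]; exact hs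
    exact ⟨hFint.mono_set (Set.uIcc_subset_uIcc Set.left_mem_uIcc h1),
      hFint.mono_set (Set.uIcc_subset_uIcc h1 Set.right_mem_uIcc)⟩
  have hsplit : Set.EqOn
      (fun s => (if s ≤ x then -(∫ t in a..s, F t) else ∫ t in s..b, F t) * Df s)
      (fun s => (∫ t in s..b, F t) * Df s - Set.indicator {u | u ≤ x} (fun u => I * Df u) s)
      (Set.uIcc a b) := by
    intro s hs
    rw [Set.uIcc_of_le hab.le] at hs
    dsimp only
    by_cases h : s ≤ x
    · have hadd : (∫ t in a..s, F t) + (∫ t in s..b, F t) = I :=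
        intervalIntegral.integral_add_adjacent_intervals (hFsub s hs).1 (hFsub s hs).2
      simp only [if_pos h, Set.indicator_apply, Set.mem_setOf_eq, h, if_true]
      linarith [congrArg (· * Df s) hadd, mul_comm (∫ t in a..s, F t) (Df s)]
    · simp [Set.indicator_apply, h]
  have hint1 : IntervalIntegrable (fun s => (∫ t in s..b, F t) * Df s) volume a b := by
    have hFuIcc : IntegrableOn F (Set.uIcc a b) volume := by
      rw [Set.uIcc_of_le hab.le, integrableOn_Icc_iff_integrableOn_Ioc]
      exact hFint.1
    exact hDf.continuousOn_mul (continuousOn_primitive_interval_left hFuIcc)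
  have hint2 : IntervalIntegrable (Set.indicator {u | u ≤ x} fun u => I * Df u) volume a b := by
    refine mk _ ?_
    have : Integrable (fun u => I * Df u) (volume.restrict (Set.Ioc a b)) :=
      (hDf.const_mul I).1
    exact this.indicator (measurableSet_Iic (a := x))
  have hstepC : (∫ s in a..b,
        (if s ≤ x then -(∫ t in a..s, F t) else ∫ t in s..b, F t) * Df s)
      = (∫ s in a..b, (∫ t in s..b, F t) * Df s) - I * ∫ s in a..x, Df s := by
    rw [intervalIntegral.integral_congr hsplit,
      intervalIntegral.integral_sub hint1 hint2,
      intervalIntegral.integral_indicator hx, intervalIntegral.integral_const_mul]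
  rw [hstepA, hstepB, hstepC, ← swap_aux a b hab.le F Df hFint hDf]
  ring
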